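/- Semi-discrete energy balance: under the above hypotheses, for every t ∈ ℝ, d/dt [ ½·⟨e(t), K·e(t)⟩ + ½·⟨b(t), M·b(t)⟩ ] + ⟨e(t), i(t)⟩ = 0, where ⟨·,·⟩ is the Euclidean dot product; i.e., the time derivative of the discrete electromagnetic energy equals minus the power delivered by the current. -/

import Mathlib

open Matrix

lemma hasDerivAt_dot_mulVec {n n' : ℕ} (A : Matrix (Fin n) (Fin n') ℝ)
    (u : ℝ → Fin n → ℝ) (v : ℝ → Fin n' → ℝ) (t : ℝ)
    (hu : Differentiable ℝ u) (hv : Differentiable ℝ v) :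
    HasDerivAt (fun t => u t ⬝ᵥ A.mulVec (v t))
      (deriv u t ⬝ᵥ A.mulVec (v t) + u t ⬝ᵥ A.mulVec (deriv v t)) t := by
  have hu' : ∀ j, HasDerivAt (fun t => u t j) (deriv u t j) t :=
    fun j => hasDerivAt_pi.mp (hu t).hasDerivAt j
  have hv' : ∀ k, HasDerivAt (fun t => v t k) (deriv v t k) t :=
    fun k => hasDerivAt_pi.mp (hv t).hasDerivAt k
  simp only [dotProduct, mulVec, Finset.mul_sum]
  rw [← Finset.sum_add_distrib]
  apply HasDerivAt.fun_sum
  intro j _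
  rw [← Finset.sum_add_distrib]
  apply HasDerivAt.fun_sum
  intro k _
  exact (hu' j).mul ((hv' k).const_mul (A j k))

theorem semi_discrete_energy_balance
    (Ne Nf : ℕ)
    (C : Matrix (Fin Nf) (Fin Ne) ℝ)
    (K : Matrix (Fin Ne) (Fin Ne) ℝ) (hK : K.IsSymm)
    (M : Matrix (Fin Nf) (Fin Nf) ℝ) (hM : M.IsSymm)
    (e : ℝ → Fin Ne → ℝ) (b : ℝ → Fin Nf → ℝ) (i : ℝ → Fin Ne → ℝ)
    (he : Differentiable ℝ e) (hb : Differentiable ℝ b)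
    (hfaraday : ∀ t, C.mulVec (e t) = -(deriv b t))
    (hampere : ∀ t, Cᵀ.mulVec (M.mulVec (b t)) = K.mulVec (deriv e t) + i t) :
    ∀ t : ℝ,
      deriv (fun t => (1 / 2) * (e t ⬝ᵥ K.mulVec (e t))
        + (1 / 2) * (b t ⬝ᵥ M.mulVec (b t))) t + e t ⬝ᵥ i t = 0 := by
  intro t
  have h1 := hasDerivAt_dot_mulVec K e e t he he
  have h2 := hasDerivAt_dot_mulVec M b b t hb hb
  have hD := ((h1.const_mul ((1:ℝ)/2)).fun_add (h2.const_mul ((1:ℝ)/2)))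
  rw [hD.deriv]
  -- symmetry swaps
  have swap : ∀ {n : ℕ} (A : Matrix (Fin n) (Fin n) ℝ), A.IsSymm →
      ∀ (u w : Fin n → ℝ), u ⬝ᵥ A.mulVec w = w ⬝ᵥ A.mulVec u := by
    intro n A hA u w
    rw [dotProduct_mulVec]
    nth_rewrite 1 [← hA]
    rw [vecMul_transpose, dotProduct_comm]
  have hKs := swap K hK (deriv e t) (e t)
  have hMs := swap M hM (b t) (deriv b t)
  have hA : e t ⬝ᵥ K.mulVec (deriv e t)
      = -(deriv b t ⬝ᵥ M.mulVec (b t)) - e t ⬝ᵥ i t := by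
    have h := hampere t
    have : e t ⬝ᵥ Cᵀ.mulVec (M.mulVec (b t))
        = e t ⬝ᵥ K.mulVec (deriv e t) + e t ⬝ᵥ i t := by
      rw [h, dotProduct_add]
    rw [dotProduct_mulVec, vecMul_transpose, hfaraday t] at this
    have hneg : (-(deriv b t)) ⬝ᵥ M.mulVec (b t) = -(deriv b t ⬝ᵥ M.mulVec (b t)) := by
      simp [neg_dotProduct]
    linarith [this, hneg.symm ▸ this]
  rw [hKs, hA, hMs]
  ring
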